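/- arXiv:2510.04299 — 2 statements merged into one kernel-verified Lean document; each statement's English description precedes it below -/
import Mathlib

section
/- Let F : ℝ → [0,1] be a continuous cumulative distribution function, and let (F_n) be a random sequence of cumulative distribution functions such that for every t ∈ ℝ, F_n(t) → F(t) in probability as n → ∞. Then sup_{t ∈ ℝ} |F_n(t) − F(t)| → 0 in probability as n → ∞. -/
open MeasureTheory Filter Topology

lemma exists_preimage (F : ℝ → ℝ) (hFcont : Continuous F) (hFmono : Monotone F)
    (hF0 : Tendsto F atBot (𝓝 0)) (hF1 : Tendsto F atTop (𝓝 1))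
    {v : ℝ} (hv0 : 0 < v) (hv1 : v < 1) : ∃ x, F x = v := by
  obtain ⟨a, ha⟩ := (hF0.eventually_lt_const hv0).exists
  obtain ⟨b, hb⟩ := (hF1.eventually_const_lt hv1).exists
  have hab : a ≤ b := by
    by_contra h
    push_neg at h
    exact absurd (hFmono h.le) (by linarith)
  have := intermediate_value_Icc hab hFcont.continuousOn
  obtain ⟨x, _, hx⟩ := this ⟨ha.le, hb.le⟩
  exact ⟨x, hx⟩

lemma key_bound {F G : ℝ → ℝ} (hFmono : Monotone F) (hGmono : Monotone G)
    (hFrange : ∀ x, F x ∈ Set.Icc (0:ℝ) 1)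
    (hGrange : ∀ x, G x ∈ Set.Icc (0:ℝ) 1)
    {N : ℕ} (hN : 0 < N) {t : ℕ → ℝ}
    (ht : ∀ j ∈ Finset.Icc 1 (N-1), F (t j) = (j:ℝ) / N)
    {δ : ℝ} (hδ : 0 ≤ δ)
    (hd : ∀ j ∈ Finset.Icc 1 (N-1), |G (t j) - F (t j)| ≤ δ)
    (x : ℝ) : |G x - F x| ≤ δ + 1 / N := by
  classical
  have hNr : (0:ℝ) < N := by exact_mod_cast hN
  rw [abs_sub_le_iff]
  constructor
  · -- G x - F x ≤ δ + 1/N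
    by_cases hS : ((Finset.Icc 1 (N-1)).filter (fun j => x < t j)).Nonempty
    · set S := (Finset.Icc 1 (N-1)).filter (fun j => x < t j) with hSdef
      set j := S.min' hS with hjdef
      have hjS : j ∈ S := Finset.min'_mem _ hS
      have hjI : j ∈ Finset.Icc 1 (N-1) := (Finset.mem_filter.mp hjS).1
      have hxt : x < t j := (Finset.mem_filter.mp hjS).2
      have hG : G x ≤ (j:ℝ)/N + δ := by
        have h1 : G x ≤ G (t j) := hGmono hxt.le
        have h2 := le_of_abs_le (hd j hjI)
        rw [ht j hjI] at h2
        linarith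
      have hj1 : 1 ≤ j := (Finset.mem_Icc.mp hjI).1
      have hFx : ((j:ℝ) - 1)/N ≤ F x := by
        rcases eq_or_lt_of_le hj1 with h | h
        · have : ((j:ℝ) - 1)/N = 0 := by rw [← h]; norm_num
          rw [this]; exact (hFrange x).1
        · have hmem : j - 1 ∈ Finset.Icc 1 (N-1) := by
            have := Finset.mem_Icc.mp hjI
            rw [Finset.mem_Icc]; omega
          have hnot : j - 1 ∉ S := by
            intro hc
            have := Finset.min'_le S _ hc
            omega
          have htx : t (j-1) ≤ x := by
            by_contra hlt
            push_neg at hlt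
            exact hnot (Finset.mem_filter.mpr ⟨hmem, hlt⟩)
          have hmono := hFmono htx
          rw [ht _ hmem, Nat.cast_sub hj1, Nat.cast_one] at hmono
          exact hmono
      have heq : (j:ℝ)/N = ((j:ℝ)-1)/N + 1/N := by ring
      linarith
    · have hFx : ((N:ℝ)-1)/N ≤ F x := by
        rcases Nat.lt_or_ge N 2 with h | h
        · interval_cases N
          simpa using (hFrange x).1
        · have hmem : N - 1 ∈ Finset.Icc 1 (N-1) := by rw [Finset.mem_Icc]; omega
          have htx : t (N-1) ≤ x := by
            by_contra hlt
            push_neg at hlt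
            exact hS ⟨N-1, Finset.mem_filter.mpr ⟨hmem, hlt⟩⟩
          have hmono := hFmono htx
          rw [ht _ hmem, Nat.cast_sub (by omega), Nat.cast_one] at hmono
          exact hmono
      have heq : ((N:ℝ)-1)/N = 1 - 1/N := by field_simp
      have := (hGrange x).2
      linarith
  · -- F x - G x ≤ δ + 1/N
    by_cases hS : ((Finset.Icc 1 (N-1)).filter (fun j => t j ≤ x)).Nonempty
    · set S := (Finset.Icc 1 (N-1)).filter (fun j => t j ≤ x) with hSdef
      set j := S.max' hS with hjdef
      have hjS : j ∈ S := Finset.max'_mem _ hS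
      have hjI : j ∈ Finset.Icc 1 (N-1) := (Finset.mem_filter.mp hjS).1
      have hxt : t j ≤ x := (Finset.mem_filter.mp hjS).2
      have hG : (j:ℝ)/N - δ ≤ G x := by
        have h1 : G (t j) ≤ G x := hGmono hxt
        have h2 := neg_le_of_abs_le (hd j hjI)
        rw [ht j hjI] at h2
        linarith
      have hj2 := (Finset.mem_Icc.mp hjI).2
      have hFx : F x ≤ ((j:ℝ) + 1)/N := by
        rcases eq_or_lt_of_le hj2 with h | h
        · have hcast : ((j:ℝ) + 1) = N := by
            have : j + 1 = N := by omega
            exact_mod_cast this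
          rw [hcast, div_self (ne_of_gt hNr)]
          exact (hFrange x).2
        · have hmem : j + 1 ∈ Finset.Icc 1 (N-1) := by rw [Finset.mem_Icc]; omega
          have hnot : j + 1 ∉ S := by
            intro hc
            have := Finset.le_max' S _ hc
            omega
          have htx : x < t (j+1) := by
            by_contra hlt
            push_neg at hlt
            exact hnot (Finset.mem_filter.mpr ⟨hmem, hlt⟩)
          have hmono := hFmono htx.le
          rw [ht _ hmem] at hmono
          push_cast at hmono ⊢
          linarith
      have heq : ((j:ℝ)+1)/N = (j:ℝ)/N + 1/N := by ring
      linarith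
    · have hFx : F x ≤ 1/N := by
        rcases Nat.lt_or_ge N 2 with h | h
        · interval_cases N
          simpa using (hFrange x).2
        · have hmem : 1 ∈ Finset.Icc 1 (N-1) := by rw [Finset.mem_Icc]; omega
          have htx : x < t 1 := by
            by_contra hlt
            push_neg at hlt
            exact hS ⟨1, Finset.mem_filter.mpr ⟨hmem, hlt⟩⟩
          have hmono := hFmono htx.le
          rw [ht _ hmem] at hmono
          simpa using hmono
      have := (hGrange x).1
      linarith

/-- In-probability version of Polya's theorem: if a random sequence of CDFs converges
pointwise in probability to a continuous CDF, it converges uniformly in probability. -/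
theorem polya_in_probability
    {Ω : Type*} [MeasurableSpace Ω] (μ : Measure Ω) [IsProbabilityMeasure μ]
    (F : ℝ → ℝ)
    (hFcont : Continuous F) (hFmono : Monotone F)
    (hF0 : Tendsto F atBot (𝓝 0)) (hF1 : Tendsto F atTop (𝓝 1))
    (Fn : ℕ → Ω → ℝ → ℝ)
    (hFn_mono : ∀ n ω, Monotone (Fn n ω))
    (hFn_range : ∀ n ω t, Fn n ω t ∈ Set.Icc (0:ℝ) 1)
    (hFn_rc : ∀ n ω t, ContinuousWithinAt (Fn n ω) (Set.Ici t) t)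
    (hFn_bot : ∀ n ω, Tendsto (Fn n ω) atBot (𝓝 0))
    (hFn_top : ∀ n ω, Tendsto (Fn n ω) atTop (𝓝 1))
    (hFn_meas : ∀ n t, Measurable fun ω => Fn n ω t)
    (hptwise : ∀ t : ℝ, TendstoInMeasure μ (fun n ω => Fn n ω t) atTop (fun _ => F t)) :
    TendstoInMeasure μ (fun n ω => ⨆ t : ℝ, |Fn n ω t - F t|) atTop (fun _ => (0:ℝ)) := by
  classical
  have hFrange : ∀ x, F x ∈ Set.Icc (0:ℝ) 1 := by
    intro x
    constructor
    · exact le_of_tendsto hF0 (eventually_atBot.mpr ⟨x, fun y hy => hFmono hy⟩)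
    · exact ge_of_tendsto hF1 (eventually_atTop.mpr ⟨x, fun y hy => hFmono hy⟩)
  rw [tendstoInMeasure_iff_dist]
  intro ε hε
  obtain ⟨N, hN⟩ := exists_nat_one_div_lt (show (0:ℝ) < ε/4 by linarith)
  set M := N + 1 with hMdef
  have hMpos : 0 < M := Nat.succ_pos N
  have hMr : (0:ℝ) < M := by exact_mod_cast hMpos
  have hMε : 1/(M:ℝ) < ε/4 := by
    have : ((M:ℝ)) = (N:ℝ) + 1 := by push_cast [hMdef]; ring
    rw [this]; exact hN
  have hpts : ∀ j : ℕ, ∃ x, j ∈ Finset.Icc 1 (M-1) → F x = (j:ℝ)/M := by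
    intro j
    by_cases hj : j ∈ Finset.Icc 1 (M-1)
    · obtain ⟨hj1, hj2⟩ := Finset.mem_Icc.mp hj
      have h0 : (0:ℝ) < (j:ℝ)/M := by
        apply div_pos _ hMr
        exact_mod_cast hj1
      have h1 : (j:ℝ)/M < 1 := by
        rw [div_lt_one hMr]
        exact_mod_cast Nat.lt_of_le_of_lt hj2 (Nat.sub_lt hMpos one_pos)
      obtain ⟨x, hx⟩ := exists_preimage F hFcont hFmono hF0 hF1 h0 h1
      exact ⟨x, fun _ => hx⟩
    · exact ⟨0, fun h => absurd h hj⟩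
  choose p hp using hpts
  set δ := ε/4 with hδdef
  have hδ : 0 < δ := by positivity
  have hincl : ∀ n, {ω | ε ≤ dist ((⨆ s : ℝ, |Fn n ω s - F s|)) 0} ⊆
      ⋃ j ∈ Finset.Icc 1 (M-1), {ω | δ ≤ dist (Fn n ω (p j)) (F (p j))} := by
    intro n ω hω
    simp only [Set.mem_setOf_eq, Real.dist_eq, sub_zero] at hω
    by_contra hc
    simp only [Set.mem_iUnion, Set.mem_setOf_eq, not_exists, not_le, Real.dist_eq] at hc
    have hd : ∀ j ∈ Finset.Icc 1 (M-1), |Fn n ω (p j) - F (p j)| ≤ δ := by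
      intro j hj
      exact (hc j hj).le
    have hb := key_bound hFmono (hFn_mono n ω) hFrange (hFn_range n ω) hMpos
      (fun j hj => hp j hj) hδ.le hd
    have hsup : (⨆ s : ℝ, |Fn n ω s - F s|) ≤ δ + 1/(M:ℝ) :=
      Real.iSup_le (fun s => hb s) (by positivity)
    have h0 : (0:ℝ) ≤ ⨆ s : ℝ, |Fn n ω s - F s| :=
      Real.iSup_nonneg (fun s => abs_nonneg _)
    rw [abs_of_nonneg h0] at hω
    linarith
  refine tendsto_of_tendsto_of_tendsto_of_le_of_le (tendsto_const_nhds)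
    ?_ (fun n => zero_le)
    (fun n => le_trans (measure_mono (hincl n)) (measure_biUnion_finset_le _ _))
  have hsum := tendsto_finset_sum (Finset.Icc 1 (M-1))
    (fun j (_ : j ∈ Finset.Icc 1 (M-1)) => tendstoInMeasure_iff_dist.mp (hptwise (p j)) δ hδ)
  simpa using hsum
end

section
/- Let (R̂ⁿ_1, …, R̂ⁿ_n), n ≥ 1, be triangular arrays of identically distributed (not necessarily independent) real random variables, and let F_R be a continuous CDF. Suppose that for every t ∈ ℝ, P(R̂ⁿ_1 ≤ t) → F_R(t) and P(R̂ⁿ_1 ≤ t, R̂ⁿ_2 ≤ t) → F_R(t)² as n → ∞. Then the empirical distribution function F_n(t) = n⁻¹ Σ_{i=1}^n 1{R̂ⁿ_i ≤ t} satisfies sup_{t ∈ ℝ} |F_n(t) − F_R(t)| → 0 in probability. -/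
open MeasureTheory Filter Topology

set_option linter.unusedSectionVars false

namespace EmpCDFAux

variable {Ω : Type*} [MeasurableSpace Ω]

lemma ind_eq (X : Ω → ℝ) (t : ℝ) :
    (fun ω => if X ω ≤ t then (1:ℝ) else 0) = ({ω | X ω ≤ t}).indicator 1 := by
  funext ω
  by_cases h : X ω ≤ t <;> simp [Set.indicator_apply, h]

lemma meas_setle {X : Ω → ℝ} (hX : Measurable X) (t : ℝ) :
    MeasurableSet {ω | X ω ≤ t} :=
  hX measurableSet_Iic

lemma meas_ind {X : Ω → ℝ} (hX : Measurable X) (t : ℝ) :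
    Measurable (fun ω => if X ω ≤ t then (1:ℝ) else 0) :=
  Measurable.ite (meas_setle hX t) measurable_const measurable_const

lemma empX_nonneg (X : ℕ → Ω → ℝ) (n : ℕ) (t : ℝ) (ω : Ω) :
    0 ≤ (n:ℝ)⁻¹ * ∑ i ∈ Finset.range n, (if X i ω ≤ t then (1:ℝ) else 0) := by
  apply mul_nonneg (by positivity)
  exact Finset.sum_nonneg (fun i _ => by split <;> norm_num)

lemma empX_le_one (X : ℕ → Ω → ℝ) (n : ℕ) (t : ℝ) (ω : Ω) :
    (n:ℝ)⁻¹ * ∑ i ∈ Finset.range n, (if X i ω ≤ t then (1:ℝ) else 0) ≤ 1 := by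
  rcases Nat.eq_zero_or_pos n with h | h
  · simp [h]
  have hn : (0:ℝ) < n := by exact_mod_cast h
  have hsum : ∑ i ∈ Finset.range n, (if X i ω ≤ t then (1:ℝ) else 0) ≤ (n:ℝ) := by
    calc ∑ i ∈ Finset.range n, (if X i ω ≤ t then (1:ℝ) else 0)
        ≤ ∑ _i ∈ Finset.range n, (1:ℝ) :=
          Finset.sum_le_sum (fun i _ => by split <;> norm_num)
      _ = (n:ℝ) := by simp
  calc (n:ℝ)⁻¹ * ∑ i ∈ Finset.range n, (if X i ω ≤ t then (1:ℝ) else 0)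
      ≤ (n:ℝ)⁻¹ * (n:ℝ) := mul_le_mul_of_nonneg_left hsum (by positivity)
    _ = 1 := inv_mul_cancel₀ (ne_of_gt hn)

lemma empX_mono (X : ℕ → Ω → ℝ) (n : ℕ) (ω : Ω) :
    Monotone (fun t => (n:ℝ)⁻¹ * ∑ i ∈ Finset.range n, (if X i ω ≤ t then (1:ℝ) else 0)) := by
  intro u v huv
  apply mul_le_mul_of_nonneg_left _ (by positivity)
  apply Finset.sum_le_sum
  intro i _
  split_ifs with h1 h2
  · exact le_refl _
  · exact absurd (h1.trans huv) h2
  · norm_num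
  · exact le_refl _

end EmpCDFAux

section MainAux
variable {Ω : Type*} [MeasurableSpace Ω]

lemma integral_sq_eq (μ : Measure Ω) [IsProbabilityMeasure μ]
    (X : ℕ → Ω → ℝ) (hX : ∀ i, Measurable (X i)) (n : ℕ) (hn : 1 ≤ n) (t c : ℝ)
    (hid : ∀ i < n, μ {ω | X i ω ≤ t} = μ {ω | X 0 ω ≤ t})
    (hpr : ∀ i < n, ∀ j < n, i ≠ j →
      μ {ω | X i ω ≤ t ∧ X j ω ≤ t} = μ {ω | X 0 ω ≤ t ∧ X 1 ω ≤ t}) :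
    ∫ ω, ((n:ℝ)⁻¹ * ∑ i ∈ Finset.range n, (if X i ω ≤ t then (1:ℝ) else 0) - c)^2 ∂μ
      = (n:ℝ)⁻¹ * (μ {ω | X 0 ω ≤ t}).toReal
        + (1 - (n:ℝ)⁻¹) * (μ {ω | X 0 ω ≤ t ∧ X 1 ω ≤ t}).toReal
        - 2*c*(μ {ω | X 0 ω ≤ t}).toReal + c^2 := by
  set A : ℕ → Set Ω := fun i => {ω | X i ω ≤ t} with hA
  have hAm : ∀ i, MeasurableSet (A i) := fun i => (hX i) measurableSet_Iic
  set p : ℝ := (μ (A 0)).toReal with hp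
  set q : ℝ := (μ (A 0 ∩ A 1)).toReal with hq
  have hAij : ∀ i, (A i ∩ A i) = A i := fun i => Set.inter_self _
  have hinter : ∀ i j, {ω | X i ω ≤ t ∧ X j ω ≤ t} = A i ∩ A j := by
    intro i j; ext ω; simp [hA, Set.mem_inter_iff]
  -- indicator notation
  set ind : ℕ → Ω → ℝ := fun i => (A i).indicator 1 with hind
  have hindeq : ∀ i ω, (if X i ω ≤ t then (1:ℝ) else 0) = ind i ω := by
    intro i ω
    by_cases h : X i ω ≤ t <;> simp [hind, Set.indicator_apply, hA, h]
  have hInt : ∀ i j, Integrable (fun ω => ((A i ∩ A j).indicator 1 ω : ℝ)) μ :=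
    fun i j => (integrable_const (1:ℝ)).indicator ((hAm i).inter (hAm j))
  have hInt1 : ∀ i, Integrable (fun ω => (ind i ω : ℝ)) μ :=
    fun i => (integrable_const (1:ℝ)).indicator (hAm i)
  set S : Ω → ℝ := fun ω => ∑ i ∈ Finset.range n, ind i ω with hS
  have hIntS : Integrable S μ := integrable_finset_sum _ (fun i _ => hInt1 i)
  have hS2 : ∀ ω, S ω ^ 2
      = ∑ i ∈ Finset.range n, ∑ j ∈ Finset.range n, ((A i ∩ A j).indicator 1 ω : ℝ) := by
    intro ω
    rw [sq, hS, Finset.sum_mul_sum]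
    refine Finset.sum_congr rfl (fun i _ => Finset.sum_congr rfl (fun j _ => ?_))
    rw [Set.inter_indicator_one]
    rfl
  have hIntS2 : Integrable (fun ω => S ω ^ 2) μ := by
    have : (fun ω => S ω ^ 2)
        = fun ω => ∑ i ∈ Finset.range n, ∑ j ∈ Finset.range n,
            ((A i ∩ A j).indicator 1 ω : ℝ) := funext hS2
    rw [this]
    exact integrable_finset_sum _ (fun i _ =>
      integrable_finset_sum _ (fun j _ => hInt i j))
  -- first moment
  have hI1 : ∫ ω, S ω ∂μ = (n:ℝ) * p := by
    rw [hS, integral_finset_sum _ (fun i _ => hInt1 i)]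
    have : ∀ i ∈ Finset.range n, ∫ ω, ind i ω ∂μ = p := by
      intro i hi
      rw [hind]
      rw [integral_indicator_one (hAm i), Measure.real, hp]
      exact congrArg ENNReal.toReal (hid i (Finset.mem_range.1 hi))
    rw [Finset.sum_congr rfl this, Finset.sum_const, Finset.card_range, nsmul_eq_mul]
  -- second moment
  have hI2 : ∫ ω, S ω ^ 2 ∂μ = (n:ℝ) * ((n:ℝ) * q + (p - q)) := by
    have e1 : ∫ ω, S ω ^ 2 ∂μ
        = ∑ i ∈ Finset.range n, ∑ j ∈ Finset.range n, (μ (A i ∩ A j)).toReal := by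
      rw [funext hS2, integral_finset_sum _ (fun i _ =>
        integrable_finset_sum _ (fun j _ => hInt i j))]
      refine Finset.sum_congr rfl (fun i _ => ?_)
      rw [integral_finset_sum _ (fun j _ => hInt i j)]
      exact Finset.sum_congr rfl (fun j _ => integral_indicator_one ((hAm i).inter (hAm j)))
    rw [e1]
    have e2 : ∀ i ∈ Finset.range n, ∀ j ∈ Finset.range n,
        (μ (A i ∩ A j)).toReal = q + (if j = i then p - q else 0) := by
      intro i hi j hj
      by_cases h : j = i
      · subst h
        rw [hAij, hp, hid j (Finset.mem_range.1 hj)]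
        simp
        rfl
      · rw [if_neg h, add_zero, hq]
        congr 1
        rw [← hinter, ← hinter]
        exact hpr i (Finset.mem_range.1 hi) j (Finset.mem_range.1 hj) (fun e => h e.symm)
    calc ∑ i ∈ Finset.range n, ∑ j ∈ Finset.range n, (μ (A i ∩ A j)).toReal
        = ∑ i ∈ Finset.range n, ∑ j ∈ Finset.range n, (q + (if j = i then p - q else 0)) := by
          refine Finset.sum_congr rfl (fun i hi => Finset.sum_congr rfl (fun j hj => e2 i hi j hj))
      _ = ∑ i ∈ Finset.range n, ((n:ℝ) * q + (p - q)) := by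
          refine Finset.sum_congr rfl (fun i hi => ?_)
          rw [Finset.sum_add_distrib, Finset.sum_const, Finset.card_range, nsmul_eq_mul,
            Finset.sum_ite_eq' (Finset.range n) i (fun _ => p - q), if_pos hi]
      _ = (n:ℝ) * ((n:ℝ) * q + (p - q)) := by
          rw [Finset.sum_const, Finset.card_range, nsmul_eq_mul]
  -- expand the square
  have hexp : ∫ ω, ((n:ℝ)⁻¹ * ∑ i ∈ Finset.range n, (if X i ω ≤ t then (1:ℝ) else 0) - c)^2 ∂μ
      = (n:ℝ)⁻¹ * (n:ℝ)⁻¹ * ∫ ω, S ω ^ 2 ∂μ - 2*c*(n:ℝ)⁻¹ * ∫ ω, S ω ∂μ + c^2 := by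
    have e0 : ∀ ω, ((n:ℝ)⁻¹ * ∑ i ∈ Finset.range n, (if X i ω ≤ t then (1:ℝ) else 0) - c)^2
        = (n:ℝ)⁻¹ * (n:ℝ)⁻¹ * S ω ^ 2 - 2*c*(n:ℝ)⁻¹ * S ω + c^2 := by
      intro ω
      have : ∑ i ∈ Finset.range n, (if X i ω ≤ t then (1:ℝ) else 0) = S ω := by
        rw [hS]; exact Finset.sum_congr rfl (fun i _ => hindeq i ω)
      rw [this]; ring
    rw [integral_congr_ae (Eventually.of_forall e0)]
    have hf1 : Integrable
        (fun a => (n:ℝ)⁻¹ * (n:ℝ)⁻¹ * S a ^ 2 - 2*c*(n:ℝ)⁻¹ * S a) μ :=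
      (hIntS2.const_mul _).sub (hIntS.const_mul _)
    rw [integral_add hf1 (integrable_const _),
      integral_sub (hIntS2.const_mul _) (hIntS.const_mul _),
      integral_const_mul, integral_const_mul, integral_const]
    simp
  rw [hexp, hI1, hI2]
  have hn0 : (n:ℝ) ≠ 0 := by
    have : (0:ℝ) < n := by exact_mod_cast hn
    exact ne_of_gt this
  have hp0 : (μ {ω | X 0 ω ≤ t}).toReal = p := rfl
  have hq0 : (μ {ω | X 0 ω ≤ t ∧ X 1 ω ≤ t}).toReal = q := by rw [hq, hinter 0 1]
  rw [hq0]
  field_simp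
  ring

lemma integrable_sq_bounded (μ : Measure Ω) [IsProbabilityMeasure μ] {f : Ω → ℝ}
    (hf : Measurable f) (h0 : ∀ ω, 0 ≤ f ω) (h1 : ∀ ω, f ω ≤ 1) (c : ℝ) :
    Integrable (fun ω => (f ω - c)^2) μ := by
  apply Integrable.mono' (integrable_const ((1 + |c|)^2))
    (((hf.sub measurable_const).pow_const 2).aestronglyMeasurable)
  apply ae_of_all
  intro ω
  rw [Real.norm_eq_abs, abs_of_nonneg (sq_nonneg _)]
  have h2 : |f ω - c| ≤ 1 + |c| := by
    rw [abs_le]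
    constructor <;> [skip; skip] <;>
      linarith [le_abs_self c, neg_abs_le c, h0 ω, h1 ω, abs_nonneg c]
  calc (f ω - c)^2 = |f ω - c|^2 := (sq_abs _).symm
    _ ≤ (1 + |c|)^2 := pow_le_pow_left₀ (abs_nonneg _) h2 2

lemma tendsto_meas_of_L2 (μ : Measure Ω) [IsProbabilityMeasure μ] (D : ℕ → Ω → ℝ)
    (hInt : ∀ n, Integrable (fun ω => (D n ω)^2) μ)
    (hJ : Tendsto (fun n => ∫ ω, (D n ω)^2 ∂μ) atTop (𝓝 0))
    (c : ℝ) (hc : 0 < c) :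
    Tendsto (fun n => μ {ω | c ≤ |D n ω|}) atTop (𝓝 0) := by
  have hc2 : (0:ℝ) < c^2 := by positivity
  have hset : ∀ n, {ω | c ≤ |D n ω|} = {ω | c^2 ≤ (D n ω)^2} := by
    intro n
    ext ω
    simp only [Set.mem_setOf_eq]
    rw [← sq_abs (D n ω)]
    exact (pow_le_pow_iff_left₀ hc.le (abs_nonneg _) two_ne_zero).symm
  have hub : ∀ n, μ {ω | c ≤ |D n ω|}
      ≤ ENNReal.ofReal ((c^2)⁻¹ * ∫ ω, (D n ω)^2 ∂μ) := by
    intro n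
    rw [hset n]
    have hmar := mul_meas_ge_le_integral_of_nonneg (μ := μ) (f := fun ω => (D n ω)^2)
      (ae_of_all μ fun ω => sq_nonneg _) (hInt n) (c^2)
    have h2 : (μ {ω | c^2 ≤ (D n ω)^2}).toReal ≤ (c^2)⁻¹ * ∫ ω, (D n ω)^2 ∂μ := by
      calc (μ {ω | c^2 ≤ (D n ω)^2}).toReal
          = (c^2)⁻¹ * (c^2 * (μ {ω | c^2 ≤ (D n ω)^2}).toReal) := by
            field_simp
        _ ≤ (c^2)⁻¹ * ∫ ω, (D n ω)^2 ∂μ :=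
            mul_le_mul_of_nonneg_left hmar (by positivity)
    calc μ {ω | c^2 ≤ (D n ω)^2}
        = ENNReal.ofReal ((μ {ω | c^2 ≤ (D n ω)^2}).toReal) :=
          (ENNReal.ofReal_toReal (measure_ne_top μ _)).symm
      _ ≤ ENNReal.ofReal ((c^2)⁻¹ * ∫ ω, (D n ω)^2 ∂μ) := ENNReal.ofReal_le_ofReal h2
  have hupper : Tendsto (fun n => ENNReal.ofReal ((c^2)⁻¹ * ∫ ω, (D n ω)^2 ∂μ))
      atTop (𝓝 0) := by
    have h3 : Tendsto (fun n => (c^2)⁻¹ * ∫ ω, (D n ω)^2 ∂μ) atTop (𝓝 0) := by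
      have := hJ.const_mul ((c^2)⁻¹)
      simpa [mul_zero] using this
    have h4 := ENNReal.tendsto_ofReal h3
    simpa using h4
  exact tendsto_of_tendsto_of_tendsto_of_le_of_le tendsto_const_nhds hupper
    (fun n => zero_le) hub

lemma sup_grid_bound (X : ℝ → ℝ) (hXmono : Monotone X)
    (hX0 : ∀ t, 0 ≤ X t) (hX1 : ∀ t, X t ≤ 1)
    (F : ℝ → ℝ) (hFmono : Monotone F) (hF0 : ∀ t, 0 ≤ F t) (hF1 : ∀ t, F t ≤ 1)
    (m : ℕ) (hm : 2 ≤ m) (g : ℕ → ℝ)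
    (hg : ∀ j ∈ Finset.Icc 1 (m-1), F (g j) = (j:ℝ)/m) (t : ℝ) :
    |X t - F t| ≤ (∑ j ∈ Finset.Icc 1 (m-1), |X (g j) - F (g j)|) + 1/m := by
  set s : Finset ℕ := Finset.Icc 1 (m-1) with hs
  set Sg : ℝ := ∑ j ∈ s, |X (g j) - F (g j)| with hSg
  have hSg0 : 0 ≤ Sg := Finset.sum_nonneg (fun j _ => abs_nonneg _)
  have hDj : ∀ j ∈ s, |X (g j) - F (g j)| ≤ Sg := by
    intro j hj
    rw [hSg]
    exact Finset.single_le_sum (f := fun j => |X (g j) - F (g j)|) (fun i _ => abs_nonneg _) hj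
  have hM0 : (m:ℝ) ≠ 0 := by
    have : (0:ℝ) < m := by exact_mod_cast (by omega : 0 < m)
    exact ne_of_gt this
  rw [abs_sub_le_iff]
  set T := s.filter (fun j => g j ≤ t) with hT
  by_cases hTne : T.Nonempty
  · have hjmem : T.max' hTne ∈ T := Finset.max'_mem T hTne
    set j := T.max' hTne with hj
    have hjs : j ∈ s := (Finset.mem_filter.1 hjmem).1
    have hgj : g j ≤ t := (Finset.mem_filter.1 hjmem).2
    obtain ⟨hj1, hjm⟩ := Finset.mem_Icc.1 hjs
    have hXgj : X (g j) ≤ X t := hXmono hgj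
    have hFgj : F (g j) ≤ F t := hFmono hgj
    have hDj' := abs_sub_le_iff.1 (hDj j hjs)
    have hFj : F (g j) = (j:ℝ)/m := hg j hjs
    by_cases hjtop : j = m - 1
    · have hcast : ((j:ℕ):ℝ) = (m:ℝ) - 1 := by
        rw [hjtop]
        have h1m : 1 ≤ m := by omega
        push_cast [Nat.cast_sub h1m]
        ring
      have e : F (g j) = 1 - 1/m := by
        rw [hFj, hcast]
        field_simp
      constructor
      · linarith [hX1 t, e ▸ hFgj, hSg0]
      · linarith [hF1 t, hXgj, hDj'.2]
    · have hjm' : j + 1 ≤ m - 1 := by omega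
      have hj1s : j + 1 ∈ s := Finset.mem_Icc.2 ⟨by omega, hjm'⟩
      have hnot : ¬ g (j+1) ≤ t := by
        intro h
        have := Finset.le_max' T (j+1) (Finset.mem_filter.2 ⟨hj1s, h⟩)
        omega
      have htle : t ≤ g (j+1) := (not_le.1 hnot).le
      have hXt : X t ≤ X (g (j+1)) := hXmono htle
      have hFt : F t ≤ F (g (j+1)) := hFmono htle
      have hDj1 := abs_sub_le_iff.1 (hDj (j+1) hj1s)
      have hFj1 : F (g (j+1)) = ((j:ℝ)+1)/m := by
        rw [hg (j+1) hj1s]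
        push_cast
        ring
      have estep : F (g (j+1)) - F (g j) = 1/m := by
        rw [hFj1, hFj]
        field_simp
        ring
      constructor
      · linarith [hDj1.1, hXt, hFgj, estep]
      · linarith [hDj'.2, hFt, hXgj, estep]
  · have h1s : (1:ℕ) ∈ s := Finset.mem_Icc.2 ⟨le_refl 1, by omega⟩
    have hnot : ¬ g 1 ≤ t := fun h => hTne ⟨1, Finset.mem_filter.2 ⟨h1s, h⟩⟩
    have htle : t ≤ g 1 := (not_le.1 hnot).le
    have hD1 := abs_sub_le_iff.1 (hDj 1 h1s)
    have hFg1 : F (g 1) = 1/m := by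
      rw [hg 1 h1s]
      norm_num
    constructor
    · linarith [hXmono htle, hF0 t, hD1.1, hFg1 ▸ le_refl (F (g 1))]
    · linarith [hFmono htle, hX0 t, hSg0, hFg1 ▸ le_refl (F (g 1))]
end MainAux

/-- Uniform consistency of the empirical distribution function of a triangular array of
identically distributed (not necessarily independent) random variables, under pointwise
convergence of the univariate and bivariate marginals towards a continuous CDF `F`. -/
theorem empirical_cdf_uniform_consistency
    {Ω : Type*} [MeasurableSpace Ω] (μ : Measure Ω) [IsProbabilityMeasure μ]
    (R : ℕ → ℕ → Ω → ℝ)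
    (hmeas : ∀ n i, Measurable (R n i))
    (hident : ∀ n, ∀ i < n, μ.map (R n i) = μ.map (R n 0))
    (hpair : ∀ n, ∀ i < n, ∀ j < n, i ≠ j →
      μ.map (fun ω => (R n i ω, R n j ω)) = μ.map (fun ω => (R n 0 ω, R n 1 ω)))
    (F : ℝ → ℝ) (hFcont : Continuous F) (hFmono : Monotone F)
    (hF0 : Tendsto F atBot (𝓝 0)) (hF1 : Tendsto F atTop (𝓝 1))
    (huniv : ∀ t : ℝ, Tendsto (fun n => (μ {ω | R n 0 ω ≤ t}).toReal) atTop (𝓝 (F t)))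
    (hbiv : ∀ t : ℝ, Tendsto (fun n => (μ {ω | R n 0 ω ≤ t ∧ R n 1 ω ≤ t}).toReal)
      atTop (𝓝 (F t ^ 2))) :
    TendstoInMeasure μ
      (fun (n : ℕ) (ω : Ω) => ⨆ t : ℝ,
        |(n : ℝ)⁻¹ * ∑ i ∈ Finset.range n, (if R n i ω ≤ t then (1:ℝ) else 0) - F t|)
      atTop (fun _ => (0:ℝ)) := by
  classical
  -- measurability of the empirical CDF at a fixed time
  have hXmeas : ∀ (n : ℕ) (t : ℝ), Measurable (fun ω =>
      (n:ℝ)⁻¹ * ∑ i ∈ Finset.range n, (if R n i ω ≤ t then (1:ℝ) else 0)) := by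
    intro n t
    exact (Finset.measurable_sum _ (fun i _ => EmpCDFAux.meas_ind (hmeas n i) t)).const_mul _
  -- L² convergence at each fixed t
  have hJ : ∀ t : ℝ, Tendsto (fun n : ℕ => ∫ ω,
      ((n:ℝ)⁻¹ * ∑ i ∈ Finset.range n, (if R n i ω ≤ t then (1:ℝ) else 0) - F t)^2 ∂μ)
      atTop (𝓝 0) := by
    intro t
    have hkey : ∀ᶠ (n : ℕ) in atTop, (n:ℝ)⁻¹ * (μ {ω | R n 0 ω ≤ t}).toReal
        + (1 - (n:ℝ)⁻¹) * (μ {ω | R n 0 ω ≤ t ∧ R n 1 ω ≤ t}).toReal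
        - 2*(F t)*(μ {ω | R n 0 ω ≤ t}).toReal + (F t)^2
        = ∫ ω, ((n:ℝ)⁻¹ * ∑ i ∈ Finset.range n,
            (if R n i ω ≤ t then (1:ℝ) else 0) - F t)^2 ∂μ := by
      filter_upwards [eventually_ge_atTop 1] with n hn
      have hid : ∀ i < n, μ {ω | R n i ω ≤ t} = μ {ω | R n 0 ω ≤ t} := by
        intro i hi
        have h1 : μ {ω | R n i ω ≤ t} = μ.map (R n i) (Set.Iic t) :=
          (Measure.map_apply (hmeas n i) measurableSet_Iic).symm
        rw [h1, hident n i hi, Measure.map_apply (hmeas n 0) measurableSet_Iic]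
        rfl
      have hpr : ∀ i < n, ∀ j < n, i ≠ j →
          μ {ω | R n i ω ≤ t ∧ R n j ω ≤ t} = μ {ω | R n 0 ω ≤ t ∧ R n 1 ω ≤ t} := by
        intro i hi j hj hij
        have hm1 : Measurable (fun ω => (R n i ω, R n j ω)) :=
          (hmeas n i).prodMk (hmeas n j)
        have hm2 : Measurable (fun ω => (R n 0 ω, R n 1 ω)) :=
          (hmeas n 0).prodMk (hmeas n 1)
        have hPs : MeasurableSet (Set.Iic t ×ˢ Set.Iic t) :=
          measurableSet_Iic.prod measurableSet_Iic
        have e1 : {ω | R n i ω ≤ t ∧ R n j ω ≤ t}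
            = (fun ω => (R n i ω, R n j ω)) ⁻¹' (Set.Iic t ×ˢ Set.Iic t) := by
          ext ω; simp [Set.mem_prod]
        have e2 : {ω | R n 0 ω ≤ t ∧ R n 1 ω ≤ t}
            = (fun ω => (R n 0 ω, R n 1 ω)) ⁻¹' (Set.Iic t ×ˢ Set.Iic t) := by
          ext ω; simp [Set.mem_prod]
        rw [e1, e2, ← Measure.map_apply hm1 hPs, ← Measure.map_apply hm2 hPs,
          hpair n i hi j hj hij]
      exact (integral_sq_eq μ (R n) (hmeas n) n hn t (F t) hid hpr).symm
    have hlim : Tendsto (fun n : ℕ => (n:ℝ)⁻¹ * (μ {ω | R n 0 ω ≤ t}).toReal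
        + (1 - (n:ℝ)⁻¹) * (μ {ω | R n 0 ω ≤ t ∧ R n 1 ω ≤ t}).toReal
        - 2*(F t)*(μ {ω | R n 0 ω ≤ t}).toReal + (F t)^2) atTop (𝓝 0) := by
      have h1 := tendsto_inv_atTop_nhds_zero_nat (𝕜 := ℝ)
      have h2 : Tendsto (fun n : ℕ => (n:ℝ)⁻¹ * (μ {ω | R n 0 ω ≤ t}).toReal
          + (1 - (n:ℝ)⁻¹) * (μ {ω | R n 0 ω ≤ t ∧ R n 1 ω ≤ t}).toReal
          - 2*(F t)*(μ {ω | R n 0 ω ≤ t}).toReal + (F t)^2) atTop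
          (𝓝 (0 * F t + (1 - 0) * F t ^ 2 - 2 * F t * F t + F t ^ 2)) :=
        (((h1.mul (huniv t)).add ((tendsto_const_nhds.sub h1).mul (hbiv t))).sub
          ((huniv t).const_mul (2*(F t)))).add tendsto_const_nhds
      have e : 0 * F t + (1 - 0) * F t ^ 2 - 2 * F t * F t + F t ^ 2 = 0 := by ring
      rwa [e] at h2
    exact Tendsto.congr' hkey hlim
  -- integrability
  have hIntD : ∀ (n : ℕ) (t : ℝ), Integrable (fun ω =>
      ((n:ℝ)⁻¹ * ∑ i ∈ Finset.range n, (if R n i ω ≤ t then (1:ℝ) else 0) - F t)^2) μ :=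
    fun n t => integrable_sq_bounded μ (hXmeas n t)
      (fun ω => EmpCDFAux.empX_nonneg (R n) n t ω)
      (fun ω => EmpCDFAux.empX_le_one (R n) n t ω) (F t)
  -- pointwise convergence in measure
  have hptw : ∀ (t c : ℝ), 0 < c → Tendsto (fun n : ℕ => μ {ω | c ≤
      |(n:ℝ)⁻¹ * ∑ i ∈ Finset.range n, (if R n i ω ≤ t then (1:ℝ) else 0) - F t|})
      atTop (𝓝 0) := fun t c hc =>
    tendsto_meas_of_L2 μ (fun (n : ℕ) ω =>
      (n:ℝ)⁻¹ * ∑ i ∈ Finset.range n, (if R n i ω ≤ t then (1:ℝ) else 0) - F t)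
      (fun n => hIntD n t) (hJ t) c hc
  -- bounds for F
  have hF_nonneg : ∀ t, 0 ≤ F t := fun t =>
    le_of_tendsto hF0 ((eventually_le_atBot t).mono fun x hx => hFmono hx)
  have hF_le_one : ∀ t, F t ≤ 1 := fun t =>
    ge_of_tendsto hF1 ((eventually_ge_atTop t).mono fun x hx => hFmono hx)
  -- main argument
  rw [tendstoInMeasure_iff_dist]
  intro ε hε
  obtain ⟨k, hk⟩ := exists_nat_one_div_lt (half_pos hε)
  set m : ℕ := k + 2 with hmdef
  have hm2 : 2 ≤ m := by omega
  have hmR : (0:ℝ) < (m:ℝ) := by exact_mod_cast (by omega : 0 < m)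
  have hminv : (1:ℝ)/(m:ℝ) < ε/2 := by
    have hle : ((k:ℝ)+1) ≤ (m:ℝ) := by
      rw [hmdef]; push_cast; linarith
    have h1 : (1:ℝ)/(m:ℝ) ≤ 1/((k:ℝ)+1) :=
      one_div_le_one_div_of_le (by positivity) hle
    exact lt_of_le_of_lt h1 hk
  -- construct the grid
  have hsurj : ∀ j : ℕ, ∃ x : ℝ, 1 ≤ j → j ≤ m - 1 → F x = (j:ℝ)/(m:ℝ) := by
    intro j
    by_cases hj : 1 ≤ j ∧ j ≤ m - 1
    · obtain ⟨hj1, hj2⟩ := hj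
      have hjR : (0:ℝ) < (j:ℝ) := by exact_mod_cast (by omega : 0 < j)
      have hv0 : (0:ℝ) < (j:ℝ)/(m:ℝ) := div_pos hjR hmR
      have hv1 : (j:ℝ)/(m:ℝ) < 1 := by
        rw [div_lt_one hmR]
        exact_mod_cast (by omega : j < m)
      obtain ⟨a, ha⟩ := (hF0.eventually_lt_const hv0).exists
      obtain ⟨b, hb⟩ := (hF1.eventually_const_lt hv1).exists
      have hab : a ≤ b := by
        by_contra hab
        push_neg at hab
        have := hFmono hab.le
        linarith
      obtain ⟨x, _, hx⟩ := intermediate_value_Icc hab hFcont.continuousOn ⟨ha.le, hb.le⟩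
      exact ⟨x, fun _ _ => hx⟩
    · exact ⟨0, fun h1 h2 => absurd ⟨h1, h2⟩ hj⟩
  choose g hg using hsurj
  have hg' : ∀ j ∈ Finset.Icc 1 (m-1), F (g j) = (j:ℝ)/(m:ℝ) := fun j hj =>
    hg j (Finset.mem_Icc.1 hj).1 (Finset.mem_Icc.1 hj).2
  have hcard : (Finset.Icc 1 (m-1)).card = m - 1 := by rw [Nat.card_Icc]; omega
  have hm1R : (0:ℝ) < ((m-1:ℕ):ℝ) := by exact_mod_cast (by omega : 0 < m - 1)
  set c' : ℝ := (ε/2) / ((m-1:ℕ):ℝ) with hc'def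
  have hc'pos : 0 < c' := div_pos (half_pos hε) hm1R
  -- the key uniform bound
  have hkey : ∀ (n : ℕ) (ω : Ω), (⨆ t : ℝ,
      |(n:ℝ)⁻¹ * ∑ i ∈ Finset.range n, (if R n i ω ≤ t then (1:ℝ) else 0) - F t|)
      ≤ (∑ j ∈ Finset.Icc 1 (m-1),
          |(n:ℝ)⁻¹ * ∑ i ∈ Finset.range n,
            (if R n i ω ≤ g j then (1:ℝ) else 0) - F (g j)|) + 1/(m:ℝ) := by
    intro n ω
    apply ciSup_le
    intro t
    exact sup_grid_bound
      (fun t => (n:ℝ)⁻¹ * ∑ i ∈ Finset.range n, (if R n i ω ≤ t then (1:ℝ) else 0))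
      (EmpCDFAux.empX_mono (R n) n ω)
      (fun t => EmpCDFAux.empX_nonneg (R n) n t ω)
      (fun t => EmpCDFAux.empX_le_one (R n) n t ω)
      F hFmono hF_nonneg hF_le_one m hm2 g hg' t
  -- event inclusion
  have hincl : ∀ n : ℕ, {ω | ε ≤ dist (⨆ t : ℝ,
      |(n:ℝ)⁻¹ * ∑ i ∈ Finset.range n, (if R n i ω ≤ t then (1:ℝ) else 0) - F t|) 0}
      ⊆ ⋃ j ∈ Finset.Icc 1 (m-1), {ω | c' ≤
        |(n:ℝ)⁻¹ * ∑ i ∈ Finset.range n, (if R n i ω ≤ g j then (1:ℝ) else 0) - F (g j)|} := by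
    intro n ω hω
    simp only [Set.mem_setOf_eq, Real.dist_eq, sub_zero] at hω
    have hsupnn : 0 ≤ ⨆ t : ℝ,
        |(n:ℝ)⁻¹ * ∑ i ∈ Finset.range n, (if R n i ω ≤ t then (1:ℝ) else 0) - F t| :=
      Real.iSup_nonneg (fun t => abs_nonneg _)
    rw [abs_of_nonneg hsupnn] at hω
    have h1 : ε ≤ (∑ j ∈ Finset.Icc 1 (m-1),
        |(n:ℝ)⁻¹ * ∑ i ∈ Finset.range n,
          (if R n i ω ≤ g j then (1:ℝ) else 0) - F (g j)|) + 1/(m:ℝ) :=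
      le_trans hω (hkey n ω)
    have hsum_c : ∑ _j ∈ Finset.Icc 1 (m-1), c' = ε/2 := by
      rw [Finset.sum_const, hcard, nsmul_eq_mul, hc'def, mul_comm,
        div_mul_cancel₀ _ (ne_of_gt hm1R)]
    have h2 : ∑ j ∈ Finset.Icc 1 (m-1), c' ≤ ∑ j ∈ Finset.Icc 1 (m-1),
        |(n:ℝ)⁻¹ * ∑ i ∈ Finset.range n,
          (if R n i ω ≤ g j then (1:ℝ) else 0) - F (g j)| := by
      rw [hsum_c]
      linarith
    obtain ⟨j, hjs, hjc⟩ := Finset.exists_le_of_sum_le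
      ⟨1, Finset.mem_Icc.2 ⟨le_refl 1, by omega⟩⟩ h2
    exact Set.mem_biUnion hjs hjc
  -- conclusion via squeeze
  have hsum_tendsto : Tendsto (fun n : ℕ => ∑ j ∈ Finset.Icc 1 (m-1), μ {ω | c' ≤
      |(n:ℝ)⁻¹ * ∑ i ∈ Finset.range n, (if R n i ω ≤ g j then (1:ℝ) else 0) - F (g j)|})
      atTop (𝓝 0) := by
    have h := tendsto_finset_sum (Finset.Icc 1 (m-1))
      (fun j _ => hptw (g j) c' hc'pos)
    simpa using h
  refine tendsto_of_tendsto_of_tendsto_of_le_of_le tendsto_const_nhds hsum_tendsto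
    (fun n => zero_le) (fun n => ?_)
  calc μ {ω | ε ≤ dist (⨆ t : ℝ,
        |(n:ℝ)⁻¹ * ∑ i ∈ Finset.range n, (if R n i ω ≤ t then (1:ℝ) else 0) - F t|) 0}
      ≤ μ (⋃ j ∈ Finset.Icc 1 (m-1), {ω | c' ≤
        |(n:ℝ)⁻¹ * ∑ i ∈ Finset.range n, (if R n i ω ≤ g j then (1:ℝ) else 0) - F (g j)|}) :=
        measure_mono (hincl n)
    _ ≤ ∑ j ∈ Finset.Icc 1 (m-1), μ {ω | c' ≤
        |(n:ℝ)⁻¹ * ∑ i ∈ Finset.range n, (if R n i ω ≤ g j then (1:ℝ) else 0) - F (g j)|} :=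
        measure_biUnion_finset_le _ _
end
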